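/- Fix T > 0, S₀ > 0, and a price 0 < C₀ < S₀ of an at-the-money option. Let σ^B > 0 be the implied Bachelier volatility, i.e. the unique solution of C₀ = σ^B·√(T/(2π)), and let σ^{BS} > 0 be the implied Black–Merton–Scholes volatility, i.e. the unique solution of C₀ = S₀·(Φ(σ^{BS}√T/2) − Φ(−σ^{BS}√T/2)). Then 0 ≤ σ^{BS} − σ^B/S₀ ≤ (T/12)·(σ^{BS})³. -/

import Mathlib

open MeasureTheory

noncomputable def stdNormalCdf (x : ℝ) : ℝ :=
  ∫ y in Set.Iic x, (Real.sqrt (2 * Real.pi))⁻¹ * Real.exp (-y ^ 2 / 2)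

lemma gauss_integrable : Integrable (fun y : ℝ => Real.exp (-y ^ 2 / 2)) := by
  have := integrable_exp_neg_mul_sq (by norm_num : (0:ℝ) < 1/2)
  convert this using 2 with y
  ring_nf

set_option maxHeartbeats 1000000 in
lemma cdf_sub (x : ℝ) :
    stdNormalCdf x - stdNormalCdf (-x)
      = (Real.sqrt (2 * Real.pi))⁻¹ * (2 * ∫ y in (0:ℝ)..x, Real.exp (-y ^ 2 / 2)) := by
  have hInt : Integrable (fun y : ℝ => (Real.sqrt (2 * Real.pi))⁻¹ * Real.exp (-y ^ 2 / 2)) :=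
    gauss_integrable.const_mul _
  have h1 : stdNormalCdf x - stdNormalCdf (-x)
      = ∫ y in (-x)..x, (Real.sqrt (2 * Real.pi))⁻¹ * Real.exp (-y ^ 2 / 2) := by
    rw [stdNormalCdf, stdNormalCdf,
      intervalIntegral.integral_Iic_sub_Iic hInt.integrableOn hInt.integrableOn]
  have h2 := intervalIntegral.integral_comp_neg (a := (0:ℝ)) (b := x)
    (fun y => Real.exp (-y ^ 2 / 2))
  simp only [neg_sq, neg_zero] at h2
  rw [h1, intervalIntegral.integral_const_mul,
    ← intervalIntegral.integral_add_adjacent_intervals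
      (a := -x) (b := (0:ℝ)) (c := x)
      (gauss_integrable.intervalIntegrable) (gauss_integrable.intervalIntegrable), ← h2]
  ring

lemma key_bound {x : ℝ} (hx : 0 ≤ x) :
    0 ≤ x - (∫ y in (0:ℝ)..x, Real.exp (-y ^ 2 / 2))
      ∧ x - (∫ y in (0:ℝ)..x, Real.exp (-y ^ 2 / 2)) ≤ x ^ 3 / 6 := by
  have hdiff : x - (∫ y in (0:ℝ)..x, Real.exp (-y ^ 2 / 2))
      = ∫ y in (0:ℝ)..x, (1 - Real.exp (-y ^ 2 / 2)) := by
    rw [intervalIntegral.integral_sub intervalIntegrable_const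
      gauss_integrable.intervalIntegrable]
    simp
  have hcont : Continuous fun y : ℝ => 1 - Real.exp (-y ^ 2 / 2) := by continuity
  constructor
  · rw [hdiff]
    apply intervalIntegral.integral_nonneg hx
    intro y _
    simp only [sub_nonneg]
    calc Real.exp (-y ^ 2 / 2) ≤ Real.exp 0 := by
          apply Real.exp_le_exp.2; nlinarith [sq_nonneg y]
      _ = 1 := Real.exp_zero
  · rw [hdiff]
    have h2 : (∫ y in (0:ℝ)..x, y ^ 2 / 2) = x ^ 3 / 6 := by
      simp [intervalIntegral.integral_div, integral_pow]
      ring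
    rw [← h2]
    apply intervalIntegral.integral_mono_on hx
      (hcont.intervalIntegrable _ _)
      ((by continuity : Continuous fun y : ℝ => y ^ 2 / 2).intervalIntegrable _ _)
    intro y _
    have := Real.add_one_le_exp (-y ^ 2 / 2)
    linarith

/-- Comparison of implied volatilities for a given at-the-money price `C₀`:
if `σᴮ` is the implied Bachelier volatility (`C₀ = σᴮ√(T/(2π))`) and `σᴮˢ` is the implied
Black–Merton–Scholes volatility (`C₀ = S₀(Φ(σᴮˢ√T/2) − Φ(−σᴮˢ√T/2))`), then
`0 ≤ σᴮˢ − σᴮ/S₀ ≤ (T/12)·(σᴮˢ)³`. -/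
theorem implied_vol_bachelier_vs_black_scholes (T S₀ C₀ σB σBS : ℝ)
    (hT : 0 < T) (hS₀ : 0 < S₀) (hC₀ : 0 < C₀) (hC₀S : C₀ < S₀)
    (hσB : 0 < σB) (hB : C₀ = σB * Real.sqrt (T / (2 * Real.pi)))
    (hσBS : 0 < σBS)
    (hBS : C₀ = S₀ * (stdNormalCdf (σBS * Real.sqrt T / 2)
      - stdNormalCdf (-(σBS * Real.sqrt T / 2)))) :
    0 ≤ σBS - σB / S₀ ∧ σBS - σB / S₀ ≤ T / 12 * σBS ^ 3 := by
  set x := σBS * Real.sqrt T / 2 with hxdef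
  have hsT : 0 < Real.sqrt T := Real.sqrt_pos.2 hT
  have hx : 0 ≤ x := by positivity
  have h2π : 0 < Real.sqrt (2 * Real.pi) := Real.sqrt_pos.2 (by positivity)
  set G := ∫ y in (0:ℝ)..x, Real.exp (-y ^ 2 / 2) with hG
  obtain ⟨hlow, hhigh⟩ := key_bound hx
  rw [cdf_sub x] at hBS
  rw [Real.sqrt_div hT.le] at hB
  -- from the two price formulas: σB * √T = 2 * G * S₀
  have hkey : σB * Real.sqrt T = 2 * G * S₀ := by
    have h := hB.symm.trans hBS
    field_simp [h2π.ne'] at h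
    have hG' : G = ∫ y in (0:ℝ)..x, Real.exp (-(y ^ 2 / 2)) := by simp only [hG, neg_div]
    rw [hG', h]; ring
  have hσB_div : σB / S₀ = 2 * G / Real.sqrt T :=
    (div_eq_div_iff hS₀.ne' hsT.ne').2 (by linarith [hkey])
  have hsq : Real.sqrt T ^ 2 = T := Real.sq_sqrt hT.le
  have e1 : σBS - 2 * G / Real.sqrt T = 2 * (x - G) / Real.sqrt T := by
    rw [hxdef]; field_simp
  rw [hσB_div, e1]
  constructor
  · positivity
  · rw [div_le_iff₀ hsT]
    have hx3 : x ^ 3 = σBS ^ 3 * (Real.sqrt T ^ 2 * Real.sqrt T) / 8 := by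
      rw [hxdef]; ring
    nlinarith [hhigh, mul_pos (mul_pos hT (pow_pos hσBS 3)) hsT]
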